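/- arXiv:1506.03378 — 3 statements merged into one kernel-verified Lean document; each statement's English description precedes it below -/
import Mathlib

section
/- In the 2-Actions-And-2-Models case with θ1 the true model and reward gap Δ = μ1(θ1) − μ2(θ1) ≥ 0, the frequentist regret of Thompson Sampling with prior p_1 satisfies R_T(θ1, TS(p_1)) ≤ Δ·T·(1 − p_1(θ1)). -/
open MeasureTheory ProbabilityTheory

noncomputable section

/-- A two-action, two-model stochastic bandit instance.  Actions and models are both
indexed by `Fin 2`; model `0` is `θ1` and model `1` is `θ2`.  The reward distribution
`ν_i(θ)` of action `i` under model `θ` has density `ℓ i θ` with respect to the common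
measure `ν`, which is supported on `[0,1]`. -/
structure TwoTwoBandit where
  ν : Measure ℝ
  supp : ∀ᵐ x ∂ν, x ∈ Set.Icc (0 : ℝ) 1
  ℓ : Fin 2 → Fin 2 → ℝ → ℝ
  ℓ_meas : ∀ i θ, Measurable (ℓ i θ)
  ℓ_nonneg : ∀ i θ x, 0 ≤ ℓ i θ x
  ℓ_int : ∀ i θ, ∫ x, ℓ i θ x ∂ν = 1

namespace TwoTwoBandit

/-- The reward distribution `ν_i(θ)`. -/
def dist (B : TwoTwoBandit) (i θ : Fin 2) : Measure ℝ :=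
  B.ν.withDensity fun x => ENNReal.ofReal (B.ℓ i θ x)

/-- The mean reward `μ_i(θ)`. -/
def mean (B : TwoTwoBandit) (i θ : Fin 2) : ℝ :=
  ∫ x, x * B.ℓ i θ x ∂B.ν

/-- The smoothness assumption with parameter `s`:  ν-almost surely,
`s⁻¹ · ℓ_i(θ1) ≤ ℓ_i(θ2) ≤ s · ℓ_i(θ1)` for both actions `i`. -/
def Smooth (B : TwoTwoBandit) (s : ℝ) : Prop :=
  ∀ i, ∀ᵐ x ∂B.ν, s⁻¹ * B.ℓ i 0 x ≤ B.ℓ i 1 x ∧ B.ℓ i 1 x ≤ s * B.ℓ i 0 x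

end TwoTwoBandit

/-- A realization of Thompson Sampling on the two-action two-model bandit `B`, with
prior mass `prior` on model `θ1` and true reward-generating model `θstar`.
`p t ω` is the posterior probability mass `p_t(θ1)` of model `θ1` at time `t`
(so `p_t(θ2) = 1 - p t ω`); `F` is the history filtration, `I t` the action selected at
step `t` and `X i t` the reward of action `i` at step `t`.  The fields state that:
the posterior is adapted, starts at the prior and evolves by the Bayes rule; conditionally
on the history the action `I t` equals `i` with probability `p_t(θ_i)`; and each reward
`X i t` is independent of the history and of `I t`, with distribution `ν_i(θstar)`. -/
structure TSProcess (B : TwoTwoBandit) (prior : ℝ) (θstar : Fin 2)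
    (Ω : Type*) [mΩ : MeasurableSpace Ω] where
  P : Measure Ω
  P_prob : IsProbabilityMeasure P
  F : Filtration ℕ mΩ
  I : ℕ → Ω → Fin 2
  X : Fin 2 → ℕ → Ω → ℝ
  p : ℕ → Ω → ℝ
  I_meas : ∀ t, Measurable[F (t + 1)] (I t)
  X_meas : ∀ i t, Measurable (X i t)
  p_adapted : ∀ t, Measurable[F t] (p t)
  p_mem : ∀ t ω, p t ω ∈ Set.Icc (0 : ℝ) 1
  p_one : ∀ ω, p 1 ω = prior
  bayes : ∀ t ω, 1 ≤ t →
    p (t + 1) ω = p t ω * B.ℓ (I t ω) 0 (X (I t ω) t ω) /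
      (p t ω * B.ℓ (I t ω) 0 (X (I t ω) t ω)
        + (1 - p t ω) * B.ℓ (I t ω) 1 (X (I t ω) t ω))
  action_prob : ∀ t, 1 ≤ t →
    P[(fun ω => if I t ω = 0 then (1 : ℝ) else 0)|F t] =ᵐ[P] p t
  reward_law : ∀ i t, P.map (X i t) = B.dist i θstar
  reward_indep : ∀ i t,
    Indep (MeasurableSpace.comap (X i t) inferInstance)
      (F t ⊔ MeasurableSpace.comap (I t) ⊤) P

namespace TSProcess

variable {B : TwoTwoBandit} {prior : ℝ} {θstar : Fin 2} {Ω : Type*} [MeasurableSpace Ω]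

/-- The frequentist regret `R_T(θstar, TS(prior)) = E Σ_{t=1}^T (μ_1(θstar) − μ_{I_t}(θstar))`
of the Thompson Sampling process over horizon `T` (suitable when action `0` is optimal
under the true model, e.g. `θstar = θ1`). -/
def regret (proc : TSProcess B prior θstar Ω) (T : ℕ) : ℝ :=
  ∫ ω, (∑ t ∈ Finset.Icc 1 T, (B.mean 0 θstar - B.mean (proc.I t ω) θstar)) ∂proc.P

/-- The frequentist regret `E Σ_{t=1}^T (max_i μ_i(θstar) − μ_{I_t}(θstar))`. -/
def regretMax (proc : TSProcess B prior θstar Ω) (T : ℕ) : ℝ :=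
  ∫ ω, (∑ t ∈ Finset.Icc 1 T,
    (max (B.mean 0 θstar) (B.mean 1 θstar) - B.mean (proc.I t ω) θstar)) ∂proc.P

end TSProcess

/-- The Bernoulli distribution `Bern(q)` on `{0,1} ⊆ ℝ` with mean `q`. -/
def bern (q : ℝ) : Measure ℝ :=
  ENNReal.ofReal q • Measure.dirac 1 + ENNReal.ofReal (1 - q) • Measure.dirac 0


namespace TSAux

/-- clamp to [0,1] -/
def cl (p : ℝ) : ℝ := max 0 (min 1 p)

lemma cl_nonneg (p : ℝ) : 0 ≤ cl p := le_max_left _ _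

lemma cl_le_one (p : ℝ) : cl p ≤ 1 := max_le zero_le_one (min_le_left _ _)

lemma cl_eq_self {p : ℝ} (h : p ∈ Set.Icc (0:ℝ) 1) : cl p = p := by
  rw [cl, min_eq_right h.2, max_eq_right h.1]

lemma cl_meas : Measurable cl :=
  measurable_const.max (measurable_const.min measurable_id)

/-- The key scalar inequality. -/
lemma key_scalar {q a b : ℝ} (hq0 : 0 ≤ q) (hq1 : q ≤ 1) (ha : 0 ≤ a) (hb : 0 ≤ b) :
    q * (2 * a - (q * a + (1 - q) * b)) ≤ q * a / (q * a + (1 - q) * b) * a := by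
  set g := q * a + (1 - q) * b with hg
  have hqa : 0 ≤ q * a := mul_nonneg hq0 ha
  have hqb : 0 ≤ (1 - q) * b := mul_nonneg (by linarith) hb
  rcases eq_or_lt_of_le (show (0:ℝ) ≤ g by positivity) with h0 | hpos
  · have h1 : q * a = 0 := by nlinarith
    rw [← h0, div_zero, zero_mul]
    nlinarith
  · rw [div_mul_eq_mul_div, le_div_iff₀ hpos]
    nlinarith [mul_nonneg hq0 (sq_nonneg (a - g))]

lemma key_scalar_le_one {q a b : ℝ} (hq0 : 0 ≤ q) (hq1 : q ≤ 1) (ha : 0 ≤ a) (hb : 0 ≤ b) :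
    q * a / (q * a + (1 - q) * b) ∈ Set.Icc (0:ℝ) 1 := by
  have hqa : 0 ≤ q * a := mul_nonneg hq0 ha
  have hqb : 0 ≤ (1 - q) * b := mul_nonneg (by linarith) hb
  constructor
  · positivity
  · rcases eq_or_lt_of_le (show (0:ℝ) ≤ q * a + (1 - q) * b by positivity) with h0 | hpos
    · rw [← h0, div_zero]; norm_num
    · rw [div_le_one hpos]; linarith

variable (B : TwoTwoBandit)

lemma integrable_ell (i θ : Fin 2) : Integrable (B.ℓ i θ) B.ν := by
  by_contra h
  have h1 := B.ℓ_int i θ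
  rw [integral_undef h] at h1
  norm_num at h1

/-- The Bayes update function, with the posterior clamped to `[0,1]`. -/
def G (i : Fin 2) (p x : ℝ) : ℝ :=
  cl p * B.ℓ i 0 x / (cl p * B.ℓ i 0 x + (1 - cl p) * B.ℓ i 1 x)

lemma G_mem (i : Fin 2) (p x : ℝ) : G B i p x ∈ Set.Icc (0:ℝ) 1 :=
  key_scalar_le_one (cl_nonneg p) (cl_le_one p) (B.ℓ_nonneg i 0 x) (B.ℓ_nonneg i 1 x)

lemma G_meas (i : Fin 2) : Measurable (fun z : ℝ × ℝ => G B i z.1 z.2) := by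
  unfold G
  exact ((cl_meas.comp measurable_fst).mul ((B.ℓ_meas i 0).comp measurable_snd)).div
    (((cl_meas.comp measurable_fst).mul ((B.ℓ_meas i 0).comp measurable_snd)).add
      ((measurable_const.sub (cl_meas.comp measurable_fst)).mul
        ((B.ℓ_meas i 1).comp measurable_snd)))

/-- The key integral inequality: expected posterior (under the true model `θ1`)
after one Bayes step is at least the (clamped) prior. -/
lemma key_integral (i : Fin 2) (p : ℝ) :
    cl p ≤ ∫ x, G B i p x * B.ℓ i 0 x ∂B.ν := by
  set q := cl p with hq
  have hq0 : 0 ≤ q := cl_nonneg p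
  have hq1 : q ≤ 1 := cl_le_one p
  have hInt0 := integrable_ell B i 0
  have hInt1 := integrable_ell B i 1
  -- lower bound function
  have hlow : ∀ x, q * (2 - q) * B.ℓ i 0 x + (-(q * (1 - q))) * B.ℓ i 1 x
      ≤ G B i p x * B.ℓ i 0 x := by
    intro x
    have := key_scalar hq0 hq1 (B.ℓ_nonneg i 0 x) (B.ℓ_nonneg i 1 x) (b := B.ℓ i 1 x)
    rw [G]
    nlinarith [this]
  have hIntLow : Integrable (fun x => q * (2 - q) * B.ℓ i 0 x
      + (-(q * (1 - q))) * B.ℓ i 1 x) B.ν :=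
    (hInt0.const_mul _).add (hInt1.const_mul _)
  have hIntG : Integrable (fun x => G B i p x * B.ℓ i 0 x) B.ν := by
    refine hInt0.mono' ?_ (Filter.Eventually.of_forall fun x => ?_)
    · exact (((G_meas B i).comp (measurable_const.prodMk measurable_id)).mul
        (B.ℓ_meas i 0)).aestronglyMeasurable
    · have h1 := (G_mem B i p x).1
      have h2 := (G_mem B i p x).2
      have h3 := B.ℓ_nonneg i 0 x
      rw [Real.norm_eq_abs, abs_of_nonneg (mul_nonneg h1 h3)]
      nlinarith
  calc q = q * (2 - q) * 1 + (-(q * (1 - q))) * 1 := by ring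
    _ = ∫ x, (q * (2 - q) * B.ℓ i 0 x + (-(q * (1 - q))) * B.ℓ i 1 x) ∂B.ν := by
        rw [integral_add (hInt0.const_mul _) (hInt1.const_mul _),
          integral_const_mul, integral_const_mul, B.ℓ_int i 0, B.ℓ_int i 1]
    _ ≤ _ := integral_mono hIntLow hIntG hlow

end TSAux
namespace TSAux

open scoped NNReal ENNReal

variable {B : TwoTwoBandit} {prior : ℝ} {Ω : Type*} [mΩ : MeasurableSpace Ω]
  (proc : TSProcess B prior 0 Ω)

lemma p_meas (t : ℕ) : Measurable (proc.p t) :=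
  (proc.p_adapted t).mono (proc.F.le t) le_rfl

lemma I_meas (t : ℕ) : Measurable (proc.I t) :=
  (proc.I_meas t).mono (proc.F.le (t + 1)) le_rfl

lemma fin2_cases (j : Fin 2) : j = 0 ∨ j = 1 := by
  have : ∀ j : Fin 2, j = 0 ∨ j = 1 := by decide
  exact this j

lemma int_bd {f : Ω → ℝ} (hf : Measurable f) (hb : ∀ ω, |f ω| ≤ 1) :
    Integrable f proc.P := by
  haveI := proc.P_prob
  exact (integrable_const 1).mono' hf.aestronglyMeasurable
    (Filter.Eventually.of_forall fun ω => by rw [Real.norm_eq_abs]; exact hb ω)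


lemma ind_mul_abs_le_one {c : Prop} [Decidable c] {x : ℝ} (h1 : 0 ≤ x) (h2 : x ≤ 1) :
    |(if c then (1:ℝ) else 0) * x| ≤ 1 := by
  rw [abs_mul]
  have : |if c then (1:ℝ) else 0| ≤ 1 := by split_ifs <;> simp
  have hx : |x| ≤ 1 := abs_le.mpr ⟨by linarith, h2⟩
  calc |if c then (1:ℝ) else 0| * |x| ≤ 1 * 1 :=
        mul_le_mul this hx (abs_nonneg x) zero_le_one
    _ = 1 := by ring

lemma indepFun_X (i : Fin 2) (t : ℕ) :
    IndepFun (proc.X i t) (fun ω => (proc.p t ω, proc.I t ω)) proc.P := by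
  have h := proc.reward_indep i t
  have hle : MeasurableSpace.comap (fun ω => (proc.p t ω, proc.I t ω)) inferInstance
      ≤ proc.F t ⊔ MeasurableSpace.comap (proc.I t) ⊤ := by
    refine Measurable.comap_le (Measurable.prodMk ?_ ?_)
    · exact (proc.p_adapted t).mono le_sup_left le_rfl
    · exact Measurable.of_comap_le ((MeasurableSpace.comap_mono le_top).trans le_sup_right)
  exact indep_of_indep_of_le_right h hle

lemma step (t : ℕ) (ht : 1 ≤ t) :
    ∫ ω, proc.p t ω ∂proc.P ≤ ∫ ω, proc.p (t + 1) ω ∂proc.P := by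
  classical
  haveI := proc.P_prob
  set Z : Ω → ℝ × Fin 2 := fun ω => (proc.p t ω, proc.I t ω) with hZdef
  have hZmeas : Measurable Z := (p_meas proc t).prodMk (I_meas proc t)
  haveI : IsProbabilityMeasure (proc.P.map Z) :=
    Measure.isProbabilityMeasure_map hZmeas.aemeasurable
  -- pointwise decomposition of the Bayes update
  have hrw : ∀ ω, proc.p (t + 1) ω
      = ∑ i : Fin 2, (if proc.I t ω = i then (1:ℝ) else 0)
          * G B i (proc.p t ω) (proc.X i t ω) := by
    intro ω
    have hb := proc.bayes t ω ht
    have hcl : cl (proc.p t ω) = proc.p t ω := cl_eq_self (proc.p_mem t ω)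
    rcases fin2_cases (proc.I t ω) with h | h <;> rw [h] at hb <;>
      simp [Fin.sum_univ_two, h, G, hcl, hb]
  -- pointwise decomposition of p t
  have hrw2 : ∀ ω, proc.p t ω
      = ∑ i : Fin 2, (if proc.I t ω = i then (1:ℝ) else 0) * cl (proc.p t ω) := by
    intro ω
    have hcl : cl (proc.p t ω) = proc.p t ω := cl_eq_self (proc.p_mem t ω)
    rcases fin2_cases (proc.I t ω) with h | h <;>
      simp [Fin.sum_univ_two, h, hcl]
  -- integrability of summands
  have hmeasInd : ∀ i : Fin 2, Measurable (fun ω => if proc.I t ω = i then (1:ℝ) else 0) :=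
    fun i => Measurable.ite ((I_meas proc t) (measurableSet_singleton i))
      measurable_const measurable_const
  have hintG : ∀ i : Fin 2, Integrable
      (fun ω => (if proc.I t ω = i then (1:ℝ) else 0)
        * G B i (proc.p t ω) (proc.X i t ω)) proc.P := by
    intro i
    refine int_bd proc ?_ ?_
    · exact (hmeasInd i).mul
        ((G_meas B i).comp ((p_meas proc t).prodMk (proc.X_meas i t)))
    · intro ω
      exact ind_mul_abs_le_one (G_mem B i (proc.p t ω) (proc.X i t ω)).1
        (G_mem B i (proc.p t ω) (proc.X i t ω)).2
  have hintCl : ∀ i : Fin 2, Integrable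
      (fun ω => (if proc.I t ω = i then (1:ℝ) else 0) * cl (proc.p t ω)) proc.P := by
    intro i
    exact int_bd proc ((hmeasInd i).mul (cl_meas.comp (p_meas proc t))) fun ω =>
      ind_mul_abs_le_one (cl_nonneg (proc.p t ω)) (cl_le_one (proc.p t ω))
  -- the key per-action inequality
  have key : ∀ i : Fin 2,
      ∫ ω, (if proc.I t ω = i then (1:ℝ) else 0) * cl (proc.p t ω) ∂proc.P
      ≤ ∫ ω, (if proc.I t ω = i then (1:ℝ) else 0)
          * G B i (proc.p t ω) (proc.X i t ω) ∂proc.P := by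
    intro i
    set H : (ℝ × Fin 2) × ℝ → ℝ :=
      fun z => (if z.1.2 = i then (1:ℝ) else 0) * G B i z.1.1 z.2 with hHdef
    have hHmeas : Measurable H := by
      refine Measurable.mul ?_ ((G_meas B i).comp ((measurable_fst.fst).prodMk measurable_snd))
      exact Measurable.ite ((measurable_fst.snd) (measurableSet_singleton i))
        measurable_const measurable_const
    haveI : IsProbabilityMeasure (proc.P.map (proc.X i t)) :=
      Measure.isProbabilityMeasure_map (proc.X_meas i t).aemeasurable
    have hpair : proc.P.map (fun ω => (Z ω, proc.X i t ω))
        = (proc.P.map Z).prod (proc.P.map (proc.X i t)) :=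
      (indepFun_iff_map_prod_eq_prod_map_map hZmeas.aemeasurable
        (proc.X_meas i t).aemeasurable).mp (indepFun_X proc i t).symm
    have hHbd : ∀ z, |H z| ≤ 1 := fun z =>
      ind_mul_abs_le_one (G_mem B i z.1.1 z.2).1 (G_mem B i z.1.1 z.2).2
    have hHint : Integrable H ((proc.P.map Z).prod (proc.P.map (proc.X i t))) :=
      (integrable_const 1).mono' hHmeas.aestronglyMeasurable
        (Filter.Eventually.of_forall fun z => by rw [Real.norm_eq_abs]; exact hHbd z)
    have e1 : ∫ ω, (if proc.I t ω = i then (1:ℝ) else 0)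
          * G B i (proc.p t ω) (proc.X i t ω) ∂proc.P
        = ∫ z, H z ∂((proc.P.map Z).prod (proc.P.map (proc.X i t))) := by
      rw [← hpair,
        integral_map (hZmeas.prodMk (proc.X_meas i t)).aemeasurable
          hHmeas.aestronglyMeasurable]
    rw [e1, integral_prod _ hHint]
    have hinner : ∀ z : ℝ × Fin 2,
        (if z.2 = i then (1:ℝ) else 0) * cl z.1
          ≤ ∫ x, H (z, x) ∂(proc.P.map (proc.X i t)) := by
      intro z
      have hindnn : (0:ℝ) ≤ (if z.2 = i then (1:ℝ) else 0) := by positivity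
      calc (if z.2 = i then (1:ℝ) else 0) * cl z.1
          ≤ (if z.2 = i then (1:ℝ) else 0) * ∫ x, G B i z.1 x * B.ℓ i 0 x ∂B.ν :=
            mul_le_mul_of_nonneg_left (key_integral B i z.1) hindnn
        _ = ∫ x, ((B.ℓ i 0 x).toNNReal : ℝ≥0) • H (z, x) ∂B.ν := by
            rw [← integral_const_mul]
            congr 1; funext x
            simp only [hHdef, NNReal.smul_def, Real.coe_toNNReal _ (B.ℓ_nonneg i 0 x), smul_eq_mul]
            ring
        _ = ∫ x, H (z, x)
              ∂(B.ν.withDensity fun x => (((B.ℓ i 0 x).toNNReal : ℝ≥0) : ℝ≥0∞)) :=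
            (integral_withDensity_eq_integral_smul ((B.ℓ_meas i 0).real_toNNReal) _).symm
        _ = ∫ x, H (z, x) ∂(proc.P.map (proc.X i t)) := by
            rw [proc.reward_law i t]; rfl
    have hIlow : Integrable (fun z : ℝ × Fin 2 =>
        (if z.2 = i then (1:ℝ) else 0) * cl z.1) (proc.P.map Z) := by
      refine (integrable_const 1).mono' ?_ (Filter.Eventually.of_forall fun z => ?_)
      · exact ((Measurable.ite (measurable_snd (measurableSet_singleton i))
          measurable_const measurable_const).mul (cl_meas.comp measurable_fst)).aestronglyMeasurable
      · rw [Real.norm_eq_abs]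
        exact ind_mul_abs_le_one (cl_nonneg z.1) (cl_le_one z.1)
    have hIup : Integrable
        (fun z : ℝ × Fin 2 => ∫ x, H (z, x) ∂(proc.P.map (proc.X i t)))
        (proc.P.map Z) := hHint.integral_prod_left
    have hmono := integral_mono hIlow hIup hinner
    have e2 : ∫ z, (if z.2 = i then (1:ℝ) else 0) * cl z.1 ∂(proc.P.map Z)
        = ∫ ω, (if proc.I t ω = i then (1:ℝ) else 0) * cl (proc.p t ω) ∂proc.P := by
      rw [integral_map hZmeas.aemeasurable]
      exact ((Measurable.ite (measurable_snd (measurableSet_singleton i))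
        measurable_const measurable_const).mul (cl_meas.comp measurable_fst)).aestronglyMeasurable
    rw [e2] at hmono
    exact hmono
  calc ∫ ω, proc.p t ω ∂proc.P
      = ∑ i : Fin 2, ∫ ω, (if proc.I t ω = i then (1:ℝ) else 0)
          * cl (proc.p t ω) ∂proc.P := by
        rw [← integral_finset_sum _ (fun i _ => hintCl i)]
        exact integral_congr_ae (Filter.Eventually.of_forall hrw2)
    _ ≤ ∑ i : Fin 2, ∫ ω, (if proc.I t ω = i then (1:ℝ) else 0)
          * G B i (proc.p t ω) (proc.X i t ω) ∂proc.P :=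
        Finset.sum_le_sum fun i _ => key i
    _ = ∫ ω, proc.p (t + 1) ω ∂proc.P := by
        rw [← integral_finset_sum _ (fun i _ => hintG i)]
        exact (integral_congr_ae (Filter.Eventually.of_forall hrw)).symm

lemma prior_le_integral (t : ℕ) (ht : 1 ≤ t) :
    prior ≤ ∫ ω, proc.p t ω ∂proc.P := by
  haveI := proc.P_prob
  induction t, ht using Nat.le_induction with
  | base => simp [proc.p_one]
  | succ n hn ih => exact ih.trans (step proc n hn)

lemma integral_ind (t : ℕ) (ht : 1 ≤ t) :
    ∫ ω, (if proc.I t ω = 0 then (1:ℝ) else 0) ∂proc.P = ∫ ω, proc.p t ω ∂proc.P := by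
  haveI := proc.P_prob
  rw [← integral_condExp (proc.F.le t)
    (f := fun ω => if proc.I t ω = 0 then (1:ℝ) else 0)]
  exact integral_congr_ae (proc.action_prob t ht)

end TSAux
/-- **Lemma 4(d) (trivial regret bound).**  In the 2-Actions-And-2-Models case with true
model `θ1` and reward gap `Δ = μ1(θ1) − μ2(θ1) ≥ 0`, the frequentist regret of Thompson
Sampling with prior `p_1` satisfies `R_T(θ1, TS(p_1)) ≤ Δ · T · (1 − p_1(θ1))`. -/
theorem thompson_sampling_regret_le_gap_mul
    (B : TwoTwoBandit) (prior : ℝ)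
    (hgap : 0 ≤ B.mean 0 0 - B.mean 1 0) (T : ℕ)
    (Ω : Type*) [MeasurableSpace Ω] (proc : TSProcess B prior 0 Ω) :
    proc.regret T ≤ (B.mean 0 0 - B.mean 1 0) * T * (1 - prior) := by
  classical
  haveI := proc.P_prob
  set Δ := B.mean 0 0 - B.mean 1 0 with hΔ
  have hpt : ∀ t ω, B.mean 0 0 - B.mean (proc.I t ω) 0
      = Δ * (1 - if proc.I t ω = 0 then (1:ℝ) else 0) := by
    intro t ω
    rcases TSAux.fin2_cases (proc.I t ω) with h | h <;> rw [h] <;> simp [hΔ]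
  have hmeasInd : ∀ t : ℕ, Measurable (fun ω => if proc.I t ω = 0 then (1:ℝ) else 0) :=
    fun t => Measurable.ite ((TSAux.I_meas proc t) (measurableSet_singleton 0))
      measurable_const measurable_const
  have hintInd : ∀ t : ℕ, Integrable
      (fun ω => if proc.I t ω = 0 then (1:ℝ) else 0) proc.P := by
    intro t
    refine TSAux.int_bd proc (hmeasInd t) fun ω => ?_
    split_ifs <;> simp
  have hint : ∀ t : ℕ, Integrable
      (fun ω => Δ * (1 - if proc.I t ω = 0 then (1:ℝ) else 0)) proc.P :=
    fun t => (((integrable_const (1:ℝ)).sub (hintInd t)).const_mul Δ)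
  have hTcard : (Finset.Icc 1 T).card = T := by
    rw [Nat.card_Icc]; omega
  rw [TSProcess.regret]
  calc ∫ ω, (∑ t ∈ Finset.Icc 1 T, (B.mean 0 0 - B.mean (proc.I t ω) 0)) ∂proc.P
      = ∑ t ∈ Finset.Icc 1 T,
          ∫ ω, Δ * (1 - if proc.I t ω = 0 then (1:ℝ) else 0) ∂proc.P := by
        rw [← integral_finset_sum _ (fun t _ => hint t)]
        refine integral_congr_ae (Filter.Eventually.of_forall fun ω => ?_)
        exact Finset.sum_congr rfl fun t _ => hpt t ω
    _ ≤ ∑ t ∈ Finset.Icc 1 T, Δ * (1 - prior) := by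
        refine Finset.sum_le_sum fun t hts => ?_
        have ht1 : 1 ≤ t := (Finset.mem_Icc.mp hts).1
        rw [integral_const_mul, integral_sub (integrable_const 1) (hintInd t),
          integral_const, TSAux.integral_ind proc t ht1]
        have hp := TSAux.prior_le_integral proc t ht1
        simp only [measure_univ, probReal_univ, ENNReal.toReal_one, smul_eq_mul, one_mul]
        exact mul_le_mul_of_nonneg_left (by linarith) hgap
    _ = Δ * T * (1 - prior) := by
        rw [Finset.sum_const, hTcard, nsmul_eq_mul]
        ring

end
end

section
/- Let α ∈ [0,1] and let ν1 and ν2 be two probability distributions on [0,1] with means μ1 and μ2 respectively. Then the Kullback–Leibler divergence satisfies KL(ν1, α·ν1 + (1 − α)·ν2) ≥ ((1 − α)² / 2)·|μ1 − μ2|². -/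
open MeasureTheory Real
open scoped Classical

noncomputable section


/-- On `(0,1]`, `φ(t) = t log t - t + 1 ≥ (t-1)²/2`. -/
lemma aux_phi_le_one {t : ℝ} (ht : 0 < t) (ht1 : t ≤ 1) :
    (t - 1) ^ 2 / 2 ≤ t * Real.log t - t + 1 := by
  set p : ℝ → ℝ := fun s => s * Real.log s - s + 1 - (s - 1) ^ 2 / 2 with hp
  have hcont : Continuous p := by
    exact ((Real.continuous_mul_log.sub continuous_id).add continuous_const).sub
      (by continuity)
  have hanti : AntitoneOn p (Set.Icc t 1) := by
    refine antitoneOn_of_hasDerivWithinAt_nonpos (f' := fun s => Real.log s - s + 1)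
      (convex_Icc t 1) hcont.continuousOn ?_ ?_
    · intro x hx
      rw [interior_Icc] at hx
      have hx0 : 0 < x := lt_trans ht hx.1
      have h1 := (((Real.hasDerivAt_mul_log hx0.ne').sub (hasDerivAt_id x)).add_const 1).sub
          ((((hasDerivAt_id x).sub_const 1).pow 2).div_const 2)
      simp only [id_eq] at h1
      have h2 : HasDerivAt p (Real.log x - x + 1) x := by
        refine h1.congr_deriv ?_
        norm_num
        ring
      exact h2.hasDerivWithinAt
    · intro x hx
      rw [interior_Icc] at hx
      have hx0 : 0 < x := lt_trans ht hx.1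
      have := Real.log_le_sub_one_of_pos hx0
      show Real.log x - x + 1 ≤ 0
      linarith
  have h01 : p 1 ≤ p t := hanti ⟨le_rfl, ht1⟩ ⟨ht1, le_rfl⟩ ht1
  have hp1 : p 1 = 0 := by simp [hp]
  rw [hp1] at h01
  simp only [hp] at h01
  linarith

/-- On `[1,∞)`, `φ(t) = t log t - t + 1 ≥ (t-1)²/(2t)`. -/
lemma aux_phi_ge_one {t : ℝ} (ht : 1 ≤ t) :
    (t - 1) ^ 2 / (2 * t) ≤ t * Real.log t - t + 1 := by
  set q : ℝ → ℝ := fun s => s * Real.log s - s + 1 - (s / 2 - 1 + (2 * s)⁻¹) with hq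
  have hcont : ContinuousOn q (Set.Icc 1 t) := by
    refine (((Real.continuous_mul_log.sub continuous_id).add continuous_const).continuousOn).sub
      (ContinuousOn.add (by fun_prop) ?_)
    exact (continuous_const.mul continuous_id).continuousOn.inv₀ fun x hx => by
      have : (1 : ℝ) ≤ x := hx.1
      exact (by positivity : (2:ℝ) * x ≠ 0)
  have hmono : MonotoneOn q (Set.Icc 1 t) := by
    refine monotoneOn_of_hasDerivWithinAt_nonneg
      (f' := fun x => Real.log x + 1 - 1 - (1 / 2 + -2 / (2 * x) ^ 2))
      (convex_Icc 1 t) hcont ?_ ?_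
    · intro x hx
      rw [interior_Icc] at hx
      have hx0 : (0 : ℝ) < x := lt_trans one_pos hx.1
      have h2x : HasDerivAt (fun s : ℝ => 2 * s) (2 * 1) x := (hasDerivAt_id x).const_mul 2
      have hinv : HasDerivAt (fun s : ℝ => (2 * s)⁻¹) (-(2 * 1) / (2 * x) ^ 2) x :=
        h2x.inv (by positivity)
      have hlin : HasDerivAt (fun s : ℝ => s / 2 - 1 + (2 * s)⁻¹)
          (1 / 2 + -(2 * 1) / (2 * x) ^ 2) x :=
        (((hasDerivAt_id x).div_const 2).sub_const 1).add hinv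
      have h1 : HasDerivAt q ((Real.log x + 1 - 1) - (1 / 2 + -(2 * 1) / (2 * x) ^ 2)) x :=
        (((Real.hasDerivAt_mul_log hx0.ne').sub (hasDerivAt_id x)).add_const 1).sub hlin
      have h2 : (Real.log x + 1 - 1) - (1 / 2 + -(2 * 1) / (2 * x) ^ 2)
          = Real.log x + 1 - 1 - (1 / 2 + -2 / (2 * x) ^ 2) := by norm_num
      rw [h2] at h1
      exact h1.hasDerivWithinAt
    · intro x hx
      rw [interior_Icc] at hx
      have hx1 : (1 : ℝ) < x := hx.1
      have hx0 : (0 : ℝ) < x := lt_trans one_pos hx1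
      have hlog := Real.one_sub_inv_le_log_of_pos (show (0:ℝ) < x ^ 2 by positivity)
      rw [show Real.log (x ^ 2) = 2 * Real.log x by
        rw [Real.log_pow]; norm_num] at hlog
      have hrw : (-2 : ℝ) / (2 * x) ^ 2 = -((x ^ 2)⁻¹ / 2) := by
        field_simp
      show (0:ℝ) ≤ Real.log x + 1 - 1 - (1 / 2 + -2 / (2 * x) ^ 2)
      rw [hrw]
      have hinvpos : (0:ℝ) < (x ^ 2)⁻¹ := by positivity
      have : 1 - (x ^ 2)⁻¹ ≤ 2 * Real.log x := hlog
      linarith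
  have h1t : q 1 ≤ q t := hmono ⟨le_rfl, ht⟩ ⟨ht, le_rfl⟩ ht
  have hq1 : q 1 = 0 := by norm_num [hq]
  rw [hq1] at h1t
  simp only [hq] at h1t
  have ht0 : (0:ℝ) < t := lt_of_lt_of_le one_pos ht
  have heq : (t - 1) ^ 2 / (2 * t) = t / 2 - 1 + (2 * t)⁻¹ := by
    field_simp; ring
  rw [heq]
  linarith

lemma phi_ge {t : ℝ} (ht : 0 ≤ t) :
    (t - 1) ^ 2 / (2 * max t 1) ≤ t * Real.log t - t + 1 := by
  rcases eq_or_lt_of_le ht with h | h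
  · rw [← h]
    norm_num
  · rcases le_total t 1 with h1 | h1
    · rw [max_eq_right h1]
      simpa using aux_phi_le_one h h1
    · rw [max_eq_left h1]
      exact aux_phi_ge_one h1

lemma legendre_ineq (s t : ℝ) (ht : 0 ≤ t) :
    s * t ≤ t * Real.log t - t + Real.exp s := by
  rcases eq_or_lt_of_le ht with h | h
  · rw [← h]
    simp [(Real.exp_pos s).le]
  · have h1 : s - Real.log t + 1 ≤ Real.exp (s - Real.log t) := Real.add_one_le_exp _
    have h2 : Real.exp (s - Real.log t) = Real.exp s / t := by
      rw [Real.exp_sub, Real.exp_log h]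
    rw [h2] at h1
    have h3 : (s - Real.log t + 1) * t ≤ Real.exp s := (le_div_iff₀ h).mp h1
    nlinarith

lemma exp_affine_bound (lam x : ℝ) (h0 : 0 ≤ x) (h1 : x ≤ 1) :
    Real.exp (lam * x) ≤ 1 + (Real.exp lam - 1) * x := by
  have h := convexOn_exp.2 (Set.mem_univ (0 : ℝ)) (Set.mem_univ lam)
    (by linarith : (0:ℝ) ≤ 1 - x) h0 (by ring)
  simp only [smul_eq_mul, mul_zero, zero_add, Real.exp_zero, mul_one] at h
  have : lam * x = x * lam := mul_comm _ _
  rw [this]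
  linarith

lemma integrable_id_of_ae_Icc (μ : Measure ℝ) [IsFiniteMeasure μ]
    (h : ∀ᵐ x ∂μ, x ∈ Set.Icc (0 : ℝ) 1) : Integrable (fun x => x) μ := by
  refine Integrable.mono' (integrable_const 1) measurable_id.aestronglyMeasurable ?_
  filter_upwards [h] with x hx
  rw [Real.norm_eq_abs, abs_le]
  exact ⟨by linarith [hx.1], hx.2⟩


/-- The Kullback–Leibler divergence `KL(μ, ρ) = ∫ log (dμ/dρ) dμ`, equal to `⊤` unless
`μ ≪ ρ` and the log-likelihood ratio is integrable. -/
def klDiv (μ ρ : Measure ℝ) : EReal :=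
  if μ ≪ ρ ∧ Integrable (fun x => Real.log ((μ.rnDeriv ρ x).toReal)) μ then
    ((∫ x, Real.log ((μ.rnDeriv ρ x).toReal) ∂μ : ℝ) : EReal)
  else ⊤

/-- **Lemma 7 (KL lower bound for mixtures).**  Let `α ∈ [0,1]` and let `ν1, ν2` be two
probability distributions on `[0,1]` with means `μ1, μ2`.  Then
`KL(ν1, α·ν1 + (1 − α)·ν2) ≥ ((1 − α)²/2) |μ1 − μ2|²`. -/
theorem kl_mixture_ge_mean_diff_sq (α : ℝ) (hα : α ∈ Set.Icc (0 : ℝ) 1)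
    (ν₁ ν₂ : Measure ℝ) [IsProbabilityMeasure ν₁] [IsProbabilityMeasure ν₂]
    (h₁ : ∀ᵐ x ∂ν₁, x ∈ Set.Icc (0 : ℝ) 1) (h₂ : ∀ᵐ x ∂ν₂, x ∈ Set.Icc (0 : ℝ) 1) :
    (((1 - α) ^ 2 / 2 * |(∫ x, x ∂ν₁) - ∫ x, x ∂ν₂| ^ 2 : ℝ) : EReal) ≤
      klDiv ν₁ (ENNReal.ofReal α • ν₁ + ENNReal.ofReal (1 - α) • ν₂) := by
  obtain ⟨hα0, hα1⟩ := hα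
  have h1α : (0:ℝ) ≤ 1 - α := by linarith
  set ρ : Measure ℝ := ENNReal.ofReal α • ν₁ + ENNReal.ofReal (1 - α) • ν₂ with hρdef
  haveI hρP : IsProbabilityMeasure ρ := by
    constructor
    rw [hρdef]
    simp only [Measure.add_apply, Measure.smul_apply, smul_eq_mul, measure_univ, mul_one]
    rw [← ENNReal.ofReal_add hα0 h1α]
    norm_num
  rw [klDiv]
  split_ifs with hcond
  swap
  · exact le_top
  obtain ⟨hac, hint⟩ := hcond
  rw [EReal.coe_le_coe_iff]
  -- basic facts about ρ
  have hρae : ∀ᵐ x ∂ρ, x ∈ Set.Icc (0:ℝ) 1 := by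
    rw [hρdef, ae_add_measure_iff]
    exact ⟨Measure.ae_smul_measure h₁ _, Measure.ae_smul_measure h₂ _⟩
  have hidν₁ : Integrable (fun x => x) ν₁ := integrable_id_of_ae_Icc ν₁ h₁
  have hidν₂ : Integrable (fun x => x) ν₂ := integrable_id_of_ae_Icc ν₂ h₂
  have hidρ : Integrable (fun x => x) ρ := integrable_id_of_ae_Icc ρ hρae
  set G : ℝ → ℝ := fun x => (ν₁.rnDeriv ρ x).toReal with hGdef
  have hGnn : ∀ x, 0 ≤ G x := fun x => ENNReal.toReal_nonneg
  have hGint : Integrable G ρ := Measure.integrable_toReal_rnDeriv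
  have hG1 : ∫ x, G x ∂ρ = 1 := by
    rw [hGdef, Measure.integral_toReal_rnDeriv hac]
    simp
  have hxG : ∫ x, G x * x ∂ρ = ∫ x, x ∂ν₁ := by
    simpa [smul_eq_mul] using integral_rnDeriv_smul hac (f := fun x : ℝ => x)
  have hxGint : Integrable (fun x => G x * x) ρ := by
    simpa [smul_eq_mul] using (integrable_rnDeriv_smul_iff hac
      (f := fun x : ℝ => x)).2 hidν₁
  have hKL : ∫ x, Real.log ((ν₁.rnDeriv ρ x).toReal) ∂ν₁ = ∫ x, G x * Real.log (G x) ∂ρ := by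
    rw [← integral_rnDeriv_smul hac
      (f := fun x => Real.log ((ν₁.rnDeriv ρ x).toReal))]
    simp [smul_eq_mul]
    rfl
  have hGlogGint : Integrable (fun x => G x * Real.log (G x)) ρ := by
    simpa [smul_eq_mul] using (integrable_rnDeriv_smul_iff hac
      (f := fun x => Real.log ((ν₁.rnDeriv ρ x).toReal))).2 hint
  -- means
  set M : ℝ := ∫ x, x ∂ν₁ with hMdef
  set m : ℝ := ∫ x, x ∂ρ with hmdef
  have hmval : m = α * M + (1 - α) * ∫ x, x ∂ν₂ := by
    rw [hmdef, hρdef, integral_add_measure (hidν₁.smul_measure ENNReal.ofReal_ne_top)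
      (hidν₂.smul_measure ENNReal.ofReal_ne_top), integral_smul_measure, integral_smul_measure,
      ENNReal.toReal_ofReal hα0, ENNReal.toReal_ofReal h1α, smul_eq_mul, smul_eq_mul, hMdef]
  have hM0 : 0 ≤ M := integral_nonneg_of_ae (h₁.mono fun x hx => hx.1)
  have hm0 : 0 ≤ m := integral_nonneg_of_ae (hρae.mono fun x hx => hx.1)
  have hM1 : M ≤ 1 := by
    have := integral_mono_ae hidν₁ (integrable_const (1:ℝ)) (h₁.mono fun x hx => hx.2)
    simpa using this
  have hm1 : m ≤ 1 := by
    have := integral_mono_ae hidρ (integrable_const (1:ℝ)) (hρae.mono fun x hx => hx.2)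
    simpa using this
  set K : ℝ := ∫ x, G x * Real.log (G x) ∂ρ with hKdef
  -- main variational bound
  have hmain : ∀ lam : ℝ, lam * M - (Real.exp lam - 1) * m ≤ K := by
    intro lam
    have hexp_int : Integrable (fun x => Real.exp (lam * x)) ρ := by
      refine Integrable.mono' (integrable_const (Real.exp |lam|)) ?_ ?_
      · exact (Real.continuous_exp.comp (continuous_const.mul continuous_id)).aestronglyMeasurable
      · filter_upwards [hρae] with x hx
        rw [Real.norm_eq_abs, abs_of_pos (Real.exp_pos _)]
        refine Real.exp_le_exp.2 ?_
        calc lam * x ≤ |lam| * x := by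
              exact mul_le_mul_of_nonneg_right (le_abs_self lam) hx.1
          _ ≤ |lam| * 1 := mul_le_mul_of_nonneg_left hx.2 (abs_nonneg lam)
          _ = |lam| := mul_one _
    have hlhs_int : Integrable (fun x => lam * (G x * x)) ρ := hxGint.const_mul lam
    have hrhs_int : Integrable (fun x => G x * Real.log (G x) - G x + Real.exp (lam * x)) ρ :=
      (hGlogGint.sub hGint).add hexp_int
    have hptwise : ∀ᵐ x ∂ρ, lam * (G x * x) ≤ G x * Real.log (G x) - G x + Real.exp (lam * x) := by
      refine Filter.Eventually.of_forall fun x => ?_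
      have := legendre_ineq (lam * x) (G x) (hGnn x)
      nlinarith [this]
    have hsub : Integrable (fun x => G x * Real.log (G x) - G x) ρ := hGlogGint.sub hGint
    have h1 := integral_mono_ae hlhs_int hrhs_int hptwise
    rw [integral_const_mul, integral_add hsub hexp_int,
      integral_sub hGlogGint hGint, hG1, hxG] at h1
    have h2 : ∫ x, Real.exp (lam * x) ∂ρ ≤ 1 + (Real.exp lam - 1) * m := by
      have h3 : ∀ᵐ x ∂ρ, Real.exp (lam * x) ≤ 1 + (Real.exp lam - 1) * x := by
        filter_upwards [hρae] with x hx
        exact exp_affine_bound lam x hx.1 hx.2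
      have haff : Integrable (fun x : ℝ => 1 + (Real.exp lam - 1) * x) ρ :=
        (integrable_const (1:ℝ)).add (hidρ.const_mul (Real.exp lam - 1))
      have h4 := integral_mono_ae hexp_int haff h3
      rw [integral_add (integrable_const (1:ℝ)) (hidρ.const_mul (Real.exp lam - 1)),
        integral_const_mul, integral_const] at h4
      simpa using h4
    rw [hKdef]
    linarith
  have hK0 : 0 ≤ K := by
    have := hmain 0
    simpa using this
  -- reduce the goal
  rw [hKL]
  have hgoal : (M - m) ^ 2 / 2 ≤ K → (1 - α) ^ 2 / 2 * |M - ∫ x, x ∂ν₂| ^ 2 ≤ K := by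
    intro h
    have hMm : M - m = (1 - α) * (M - ∫ x, x ∂ν₂) := by rw [hmval]; ring
    have : (1 - α) ^ 2 / 2 * |M - ∫ x, x ∂ν₂| ^ 2 = (M - m) ^ 2 / 2 := by
      rw [sq_abs, hMm]; ring
    linarith
  refine hgoal ?_
  -- case analysis to optimize lam
  rcases eq_or_lt_of_le hm0 with hm | hm
  · -- m = 0, then M must be 0
    have hMz : M = 0 := by
      by_contra hne
      have hMpos : 0 < M := lt_of_le_of_ne hM0 (Ne.symm hne)
      have h5 := hmain ((K + 1) / M)
      rw [← hm, mul_zero, sub_zero, div_mul_cancel₀ _ hMpos.ne'] at h5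
      linarith
    rw [hMz, ← hm]
    simpa using hK0
  · rcases eq_or_lt_of_le hM0 with hM | hM
    · -- M = 0 : take lam = -log 2
      have h5 := hmain (-Real.log 2)
      rw [← hM, mul_zero, Real.exp_neg, Real.exp_log (by norm_num : (0:ℝ) < 2)] at h5
      have h6 : m / 2 ≤ K := by
        have : ((2:ℝ)⁻¹ - 1) * m = -(m / 2) := by ring
        rw [this] at h5
        linarith
      rw [← hM]
      nlinarith
    · -- M > 0, m > 0 : take lam = log (M / m)
      set t : ℝ := M / m with htdef
      have ht0 : 0 < t := div_pos hM hm
      have hMt : M = m * t := by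
        rw [htdef, mul_div_cancel₀ _ hm.ne']
      have h5 := hmain (Real.log t)
      rw [Real.exp_log ht0] at h5
      have h6 : Real.log t * M - (t - 1) * m = m * (t * Real.log t - t + 1) := by
        rw [hMt]; ring
      rw [h6] at h5
      have hphi := phi_ge ht0.le
      have hmmax : m * max t 1 ≤ 1 := by
        rcases le_total t 1 with h7 | h7
        · rw [max_eq_right h7, mul_one]; exact hm1
        · rw [max_eq_left h7, ← hMt]; exact hM1
      have hmaxpos : (0:ℝ) < max t 1 := lt_of_lt_of_le one_pos (le_max_right _ _)
      have hfin : (M - m) ^ 2 / 2 ≤ m * ((t - 1) ^ 2 / (2 * max t 1)) := by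
        have heq : m * ((t - 1) ^ 2 / (2 * max t 1)) = m * (t - 1) ^ 2 / (2 * max t 1) := by
          ring
        have heq2 : (M - m) ^ 2 = m ^ 2 * (t - 1) ^ 2 := by rw [hMt]; ring
        rw [heq, heq2, div_le_div_iff₀ (by norm_num) (by positivity)]
        nlinarith [mul_nonneg (mul_nonneg hm0 (sq_nonneg (t - 1))) (sub_nonneg.2 hmmax)]
      calc (M - m) ^ 2 / 2 ≤ m * ((t - 1) ^ 2 / (2 * max t 1)) := hfin
        _ ≤ m * (t * Real.log t - t + 1) := mul_le_mul_of_nonneg_left hphi hm0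
        _ ≤ K := h5


end
end

section
/- Consider the 2-Actions-And-2-Models case with the good-prior Bernoulli instance ν_1(θ1) = ν_1(θ2) = Bern(1/2), ν_2(θ1) = Bern(1/2 − Δ), ν_2(θ2) = Bern(1/2 + Δ), where Δ = √(1/(8·(1 − p_1(θ1))·T)) and T ≥ 1/(1 − p_1(θ1)). Then for every t ≤ T, E^{θ1}[p_t(θ2)^{-1}] ≤ 5/(1 − p_1(θ1)), and consequently E^{θ1}[p_t(θ2)] ≥ (1 − p_1(θ1))/5. -/
open MeasureTheory ProbabilityTheory

noncomputable section

lemma bern_one (q : ℝ) : bern q {1} = ENNReal.ofReal q := by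
  simp [bern, Measure.dirac_apply' _ (measurableSet_singleton _)]

lemma bern_zero (q : ℝ) : bern q {0} = ENNReal.ofReal (1 - q) := by
  simp [bern, Measure.dirac_apply' _ (measurableSet_singleton _)]

lemma bern_compl (q : ℝ) : bern q ({0, 1} : Set ℝ)ᶜ = 0 := by
  have hm : MeasurableSet (({0, 1} : Set ℝ)ᶜ) :=
    (MeasurableSet.insert (measurableSet_singleton 1) 0).compl
  simp [bern, Measure.dirac_apply' _ hm]

lemma atom_val {ν : Measure ℝ} {f : ℝ → ℝ} (hf0 : ∀ x, 0 ≤ f x)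
    {c : ℝ} (hc : 0 < c) {z : ℝ}
    (h : ENNReal.ofReal (f z) * ν {z} = ENNReal.ofReal c) :
    f z * (ν {z}).toReal = c ∧ (ν {z}).toReal ≠ 0 ∧ ν {z} ≠ ⊤ := by
  have hnz : ν {z} ≠ 0 := by
    intro h0
    rw [h0, mul_zero] at h
    exact absurd h.symm (by simp [hc, hc.le, ENNReal.ofReal_eq_zero, not_le])
  have htop : ν {z} ≠ ⊤ := by
    intro h0
    rcases eq_or_ne (ENNReal.ofReal (f z)) 0 with h'|h'
    · rw [h', zero_mul] at h
      exact absurd h.symm (by simp [ENNReal.ofReal_eq_zero, not_le, hc])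
    · rw [h0, ENNReal.mul_top h'] at h
      exact ENNReal.ofReal_ne_top h.symm
  refine ⟨?_, ?_, htop⟩
  · have := congrArg ENNReal.toReal h
    rwa [ENNReal.toReal_mul, ENNReal.toReal_ofReal (hf0 z), ENNReal.toReal_ofReal hc.le] at this
  · simp [ENNReal.toReal_eq_zero_iff, hnz, htop]

lemma TS_bern_aux (ν : Measure ℝ) (f g : ℝ → ℝ) (hfm : Measurable f) (hgm : Measurable g)
    (hf0 : ∀ x, 0 ≤ f x) (hg0 : ∀ x, 0 ≤ g x) (hfi : ∫ x, f x ∂ν = 1)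
    {a b : ℝ} (ha0 : 0 < a) (ha1 : a < 1) (hb0 : 0 < b) (hb1 : b < 1)
    (hfd : ν.withDensity (fun x => ENNReal.ofReal (f x)) = bern a)
    (hgd : ν.withDensity (fun x => ENNReal.ofReal (g x)) = bern b) :
    Integrable (fun x => f x / g x) (ν.withDensity (fun x => ENNReal.ofReal (f x))) ∧
    ∫ x, f x / g x ∂(ν.withDensity (fun x => ENNReal.ofReal (f x))) ≤ a^2/b + (1-a)^2/(1-b) ∧
    (ν.withDensity (fun x => ENNReal.ofReal (f x))) {x | g x = 0} = 0 := by
  have hFm : Measurable fun x => ENNReal.ofReal (f x) := hfm.ennreal_ofReal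
  have hGm : Measurable fun x => ENNReal.ofReal (g x) := hgm.ennreal_ofReal
  -- atom values
  have happ : ∀ (z : ℝ), (ν.withDensity fun x => ENNReal.ofReal (f x)) {z}
      = ENNReal.ofReal (f z) * ν {z} := fun z => by
    rw [withDensity_apply _ (measurableSet_singleton _), lintegral_singleton]
  have happg : ∀ (z : ℝ), (ν.withDensity fun x => ENNReal.ofReal (g x)) {z}
      = ENNReal.ofReal (g z) * ν {z} := fun z => by
    rw [withDensity_apply _ (measurableSet_singleton _), lintegral_singleton]
  have h1f := atom_val hf0 ha0 (z := 1) (by rw [← happ, hfd, bern_one])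
  have h0f := atom_val hf0 (by linarith : (0:ℝ) < 1 - a) (z := 0) (by rw [← happ, hfd, bern_zero])
  have h1g := atom_val hg0 hb0 (z := 1) (by rw [← happg, hgd, bern_one])
  have h0g := atom_val hg0 (by linarith : (0:ℝ) < 1 - b) (z := 0) (by rw [← happg, hgd, bern_zero])
  set n1 : ℝ := (ν {1}).toReal with hn1
  set n0 : ℝ := (ν {0}).toReal with hn0
  have hn1pos : 0 < n1 := lt_of_le_of_ne ENNReal.toReal_nonneg (Ne.symm h1f.2.1)
  have hn0pos : 0 < n0 := lt_of_le_of_ne ENNReal.toReal_nonneg (Ne.symm h0f.2.1)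
  have hg1pos : 0 < g 1 := by nlinarith [h1g.1, hg0 1]
  have hg0pos : 0 < g 0 := by nlinarith [h0g.1, hg0 0]
  -- vanishing off atoms
  have hSm : MeasurableSet (({0, 1} : Set ℝ)ᶜ) :=
    (MeasurableSet.insert (measurableSet_singleton 1) 0).compl
  have hzero : ∫⁻ x in ({0, 1} : Set ℝ)ᶜ, ENNReal.ofReal (f x) ∂ν = 0 := by
    rw [← withDensity_apply _ hSm, hfd, bern_compl]
  have hae : ∀ᵐ x ∂ν, x ∈ (({0, 1} : Set ℝ)ᶜ) → f x = 0 := by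
    have h := (lintegral_eq_zero_iff hFm).mp hzero
    rw [Filter.EventuallyEq, ae_restrict_iff' hSm] at h
    filter_upwards [h] with x hx hx2
    have := hx hx2
    simp only [Pi.zero_apply, ENNReal.ofReal_eq_zero] at this
    linarith [hf0 x]
  set K1 := a / b with hK1
  set K0 := (1 - a) / (1 - b) with hK0
  set ψ : ℝ → ℝ := fun x => Set.indicator {(1:ℝ)} (fun y => K1 * f y) x
      + Set.indicator {(0:ℝ)} (fun y => K0 * f y) x with hψ
  have hratio1 : f 1 / g 1 = a / b := by
    rw [div_eq_div_iff (ne_of_gt hg1pos) (ne_of_gt hb0)]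
    nlinarith [h1f.1, h1g.1]
  have hratio0 : f 0 / g 0 = (1 - a) / (1 - b) := by
    rw [div_eq_div_iff (ne_of_gt hg0pos) (by linarith : (1:ℝ) - b ≠ 0)]
    nlinarith [h0f.1, h0g.1]
  have hkey : ∀ᵐ x ∂ν, f x * (f x / g x) ≤ ψ x := by
    filter_upwards [hae] with x hx
    by_cases h1 : x = 1
    · subst h1
      have e1 : ψ 1 = K1 * f 1 := by
        rw [hψ]; simp [Set.indicator]
      rw [e1, hratio1, hK1]
      exact le_of_eq (by ring)
    · by_cases h0 : x = 0
      · subst h0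
        have e0 : ψ 0 = K0 * f 0 := by
          rw [hψ]; simp [Set.indicator]
        rw [e0, hratio0, hK0]
        exact le_of_eq (by ring)
      · have hx0 : f x = 0 := hx (by simp [h0, h1])
        simp [hψ, Set.indicator, h0, h1, hx0]
  have hfint : Integrable f ν := by
    by_contra h
    rw [integral_undef h] at hfi
    norm_num at hfi
  have hψint : Integrable ψ ν :=
    ((hfint.const_mul K1).indicator (measurableSet_singleton 1)).add
      ((hfint.const_mul K0).indicator (measurableSet_singleton 0))
  have hφm : AEStronglyMeasurable (fun x => f x * (f x / g x)) ν :=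
    (hfm.mul (hfm.div hgm)).aestronglyMeasurable
  have hφ0 : ∀ x, 0 ≤ f x * (f x / g x) :=
    fun x => mul_nonneg (hf0 x) (div_nonneg (hf0 x) (hg0 x))
  have hφint : Integrable (fun x => f x * (f x / g x)) ν := by
    refine hψint.mono' hφm ?_
    filter_upwards [hkey] with x hx
    rw [Real.norm_eq_abs, abs_of_nonneg (hφ0 x)]
    exact hx
  have hs1 : ∫ x, Set.indicator {(1:ℝ)} (fun y => K1 * f y) x ∂ν = K1 * a := by
    rw [integral_indicator (measurableSet_singleton _), Measure.restrict_singleton,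
      integral_smul_measure, integral_dirac, smul_eq_mul, ← hn1]
    linear_combination K1 * h1f.1
  have hs0 : ∫ x, Set.indicator {(0:ℝ)} (fun y => K0 * f y) x ∂ν = K0 * (1 - a) := by
    rw [integral_indicator (measurableSet_singleton _), Measure.restrict_singleton,
      integral_smul_measure, integral_dirac, smul_eq_mul, ← hn0]
    linear_combination K0 * h0f.1
  have hψval : ∫ x, ψ x ∂ν = a^2/b + (1-a)^2/(1-b) := by
    rw [hψ]
    rw [integral_add ((hfint.const_mul K1).indicator (measurableSet_singleton 1))
      ((hfint.const_mul K0).indicator (measurableSet_singleton 0)), hs1, hs0, hK1, hK0]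
    ring
  have hφle : ∫ x, f x * (f x / g x) ∂ν ≤ a^2/b + (1-a)^2/(1-b) := by
    rw [← hψval]
    exact integral_mono_ae hφint hψint hkey
  -- transfer to withDensity
  have hcoe : (fun x => ENNReal.ofReal (f x)) = fun x => ((f x).toNNReal : ENNReal) := rfl
  have hnn : Measurable fun x => (f x).toNNReal := hfm.real_toNNReal
  have hint_wd : Integrable (fun x => f x / g x) (ν.withDensity fun x => ENNReal.ofReal (f x)) := by
    rw [integrable_withDensity_iff hFm (Filter.Eventually.of_forall fun x => ENNReal.ofReal_lt_top)]
    refine hφint.congr ?_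
    refine Filter.Eventually.of_forall fun x => ?_
    show f x * (f x / g x) = f x / g x * (ENNReal.ofReal (f x)).toReal
    rw [ENNReal.toReal_ofReal (hf0 x)]
    ring
  have hval_wd : ∫ x, f x / g x ∂(ν.withDensity fun x => ENNReal.ofReal (f x))
      = ∫ x, f x * (f x / g x) ∂ν := by
    rw [hcoe, integral_withDensity_eq_integral_smul hnn]
    congr 1
    ext x
    rw [NNReal.smul_def, smul_eq_mul, Real.coe_toNNReal _ (hf0 x)]
  refine ⟨hint_wd, by rw [hval_wd]; exact hφle, ?_⟩
  have hsub : {x | g x = 0} ⊆ ({0, 1} : Set ℝ)ᶜ := by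
    intro x hx
    simp only [Set.mem_compl_iff, Set.mem_insert_iff, Set.mem_singleton_iff]
    rintro (rfl|rfl)
    · exact absurd hx (ne_of_gt hg0pos)
    · exact absurd hx (ne_of_gt hg1pos)
  refine le_antisymm ?_ zero_le
  calc (ν.withDensity fun x => ENNReal.ofReal (f x)) {x | g x = 0}
      ≤ (ν.withDensity fun x => ENNReal.ofReal (f x)) (({0, 1} : Set ℝ)ᶜ) := measure_mono hsub
    _ = 0 := by rw [hfd, bern_compl]

lemma TS_aux_ineq (a L0 L1 : ℝ) (ha0 : 0 ≤ a) (ha1 : a ≤ 1) (h0 : 0 ≤ L0) (h1 : 0 ≤ L1) :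
    (1 - a * L0 / (a * L0 + (1 - a) * L1))⁻¹ ≤ 1 + a / (1 - a) * (L0 / L1) := by
  have hb : 0 ≤ 1 - a := by linarith
  have hrhs : 0 ≤ a / (1 - a) * (L0 / L1) :=
    mul_nonneg (div_nonneg ha0 hb) (div_nonneg h0 h1)
  rcases eq_or_lt_of_le (mul_nonneg hb h1) with hq|hq
  · rcases eq_or_ne (a * L0 + (1 - a) * L1) 0 with hD|hD
    · rw [hD, div_zero]
      norm_num
      linarith
    · have hD' : a * L0 + (1 - a) * L1 = a * L0 := by rw [← hq]; ring
      rw [hD', div_self (by rwa [hD'] at hD)]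
      norm_num
      linarith
  · have hL1 : 0 < L1 := by
      rcases lt_or_eq_of_le h1 with h|h
      · exact h
      · exfalso; rw [← h, mul_zero] at hq; exact lt_irrefl 0 hq
    have hba : 0 < 1 - a := by
      rcases lt_or_eq_of_le hb with h|h
      · exact h
      · exfalso; rw [← h, zero_mul] at hq; exact lt_irrefl 0 hq
    have hD : 0 < a * L0 + (1 - a) * L1 := by nlinarith [mul_nonneg ha0 h0]
    have h2 : 1 - a * L0 / (a * L0 + (1 - a) * L1)
        = (1 - a) * L1 / (a * L0 + (1 - a) * L1) := by
      field_simp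
      ring
    rw [h2, inv_div, div_le_iff₀ hq]
    have h3 : (1 + a / (1 - a) * (L0 / L1)) * ((1 - a) * L1) = a * L0 + (1 - a) * L1 := by
      field_simp
      ring
    rw [h3]

set_option maxHeartbeats 3200000 in
/-- **Key step of Theorem 3 (inverse posterior of θ2 stays bounded).**  For the
good-prior Bernoulli instance `ν_1(θ1) = ν_1(θ2) = Bern(1/2)`, `ν_2(θ1) = Bern(1/2 − Δ)`,
`ν_2(θ2) = Bern(1/2 + Δ)` with `Δ = √(1/(8(1 − p_1(θ1))T))` and `T ≥ 1/(1 − p_1(θ1))`,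
for every `1 ≤ t ≤ T` one has `E^{θ1}[p_t(θ2)⁻¹] ≤ 5/(1 − p_1(θ1))` and consequently
`E^{θ1}[p_t(θ2)] ≥ (1 − p_1(θ1))/5`. -/
theorem thompson_sampling_good_prior_inverse_posterior_bound
    (B : TwoTwoBandit) (prior : ℝ) (T : ℕ)
    (hprior0 : 0 ≤ prior) (hprior1 : prior < 1)
    (hT : 1 / (1 - prior) ≤ (T : ℝ))
    (hinst1 : B.dist 0 0 = bern (1 / 2))
    (hinst2 : B.dist 0 1 = bern (1 / 2))
    (hinst3 : B.dist 1 0 = bern (1 / 2 - Real.sqrt (1 / (8 * (1 - prior) * T))))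
    (hinst4 : B.dist 1 1 = bern (1 / 2 + Real.sqrt (1 / (8 * (1 - prior) * T))))
    (Ω : Type*) [MeasurableSpace Ω] (proc : TSProcess B prior 0 Ω)
    (t : ℕ) (ht1 : 1 ≤ t) (htT : t ≤ T) :
    (∫ ω, (1 - proc.p t ω)⁻¹ ∂proc.P ≤ 5 / (1 - prior)) ∧
      (1 - prior) / 5 ≤ ∫ ω, (1 - proc.p t ω) ∂proc.P := by
  haveI hPp : IsProbabilityMeasure proc.P := proc.P_prob
  have hq1 : (0:ℝ) < 1 - prior := by linarith
  have hT1 : (1:ℝ) ≤ (T:ℝ) := le_trans (by rw [le_div_iff₀ hq1]; linarith) hT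
  have hTpos : (0:ℝ) < T := by linarith
  have hpT : (1:ℝ) ≤ (1 - prior) * T := by
    have h := (div_le_iff₀ hq1).mp hT
    nlinarith [h]
  set Δ := Real.sqrt (1 / (8 * (1 - prior) * T)) with hΔdef
  have hΔ0 : 0 ≤ Δ := Real.sqrt_nonneg _
  have hΔsq : Δ^2 = 1 / (8 * (1 - prior) * T) := Real.sq_sqrt (by positivity)
  have hΔ8 : Δ^2 ≤ 1/8 := by
    rw [hΔsq, div_le_div_iff₀ (by positivity) (by norm_num)]
    nlinarith
  have hΔhalf : Δ < 1/2 := by nlinarith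
  have fin2 : ∀ j : Fin 2, j = 0 ∨ j = 1 := by decide
  have hpm : ∀ s, Measurable (proc.p s) := fun s => (proc.p_adapted s).mono (proc.F.le s) le_rfl
  have hIm : ∀ s, Measurable (proc.I s) := fun s => (proc.I_meas s).mono (proc.F.le (s+1)) le_rfl
  have hrm : ∀ i : Fin 2, Measurable (fun x => B.ℓ i 0 x / B.ℓ i 1 x) :=
    fun i => (B.ℓ_meas i 0).div (B.ℓ_meas i 1)
  have hppos : ∀ s ω, 0 ≤ proc.p s ω := fun s ω => (proc.p_mem s ω).1
  have hple : ∀ s ω, proc.p s ω ≤ 1 := fun s ω => (proc.p_mem s ω).2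
  have hpint : ∀ s, Integrable (proc.p s) proc.P := fun s =>
    (integrable_const (1:ℝ)).mono' (hpm s).aestronglyMeasurable
      (Filter.Eventually.of_forall fun ω => by
        rw [Real.norm_eq_abs, abs_of_nonneg (hppos s ω)]; exact hple s ω)
  have hfrac : ∀ s ω, proc.p s ω / (1 - proc.p s ω) ≤ (1 - proc.p s ω)⁻¹ := by
    intro s ω
    have h := sub_nonneg.mpr (hple s ω)
    have h2 : proc.p s ω * (1 - proc.p s ω)⁻¹ ≤ 1 * (1 - proc.p s ω)⁻¹ :=
      mul_le_mul_of_nonneg_right (hple s ω) (inv_nonneg.mpr h)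
    simpa [div_eq_mul_inv] using h2
  set ρ : Fin 2 → ℝ := fun i => if i = 0 then 1 else 1 + 32 * Δ^2 with hρdef
  have D0 := TS_bern_aux B.ν (B.ℓ 0 0) (B.ℓ 0 1) (B.ℓ_meas 0 0) (B.ℓ_meas 0 1)
      (B.ℓ_nonneg 0 0) (B.ℓ_nonneg 0 1) (B.ℓ_int 0 0) (a := 1/2) (b := 1/2)
      (by norm_num) (by norm_num) (by norm_num) (by norm_num) hinst1 hinst2
  have D1 := TS_bern_aux B.ν (B.ℓ 1 0) (B.ℓ 1 1) (B.ℓ_meas 1 0) (B.ℓ_meas 1 1)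
      (B.ℓ_nonneg 1 0) (B.ℓ_nonneg 1 1) (B.ℓ_int 1 0) (a := 1/2 - Δ) (b := 1/2 + Δ)
      (by linarith) (by linarith) (by linarith) (by linarith) hinst3 hinst4
  have hρ1 : (1/2-Δ)^2/(1/2+Δ) + (1-(1/2-Δ))^2/(1-(1/2+Δ)) ≤ 1 + 32 * Δ^2 := by
    have hα : (0:ℝ) < 1/2 - Δ := by linarith
    have hβ : (0:ℝ) < 1/2 + Δ := by linarith
    rw [show (1:ℝ)-(1/2-Δ) = 1/2+Δ from by ring, show (1:ℝ)-(1/2+Δ) = 1/2-Δ from by ring,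
      div_add_div _ _ (ne_of_gt hβ) (ne_of_gt hα), div_le_iff₀ (by positivity)]
    nlinarith [hΔ8, hΔ0, sq_nonneg Δ]
  have key : ∀ (i : Fin 2) (s : ℕ),
      Integrable (fun ω => B.ℓ i 0 (proc.X i s ω) / B.ℓ i 1 (proc.X i s ω)) proc.P ∧
      (∫ ω, B.ℓ i 0 (proc.X i s ω) / B.ℓ i 1 (proc.X i s ω) ∂proc.P) ≤ ρ i ∧
      proc.P {ω | B.ℓ i 1 (proc.X i s ω) = 0} = 0 := by
    intro i s
    have hmap : proc.P.map (proc.X i s) = B.dist i 0 := proc.reward_law i s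
    have Di : Integrable (fun x => B.ℓ i 0 x / B.ℓ i 1 x) (B.dist i 0) ∧
        (∫ x, B.ℓ i 0 x / B.ℓ i 1 x ∂(B.dist i 0)) ≤ ρ i ∧
        (B.dist i 0) {x | B.ℓ i 1 x = 0} = 0 := by
      rcases fin2 i with rfl|rfl
      · refine ⟨D0.1, ?_, D0.2.2⟩
        simp only [hρdef, if_pos rfl]
        exact le_trans D0.2.1 (by norm_num)
      · refine ⟨D1.1, ?_, D1.2.2⟩
        simp only [hρdef, if_neg (by decide : (1 : Fin 2) ≠ 0)]
        exact le_trans D1.2.1 hρ1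
    have hasm : AEStronglyMeasurable (fun x => B.ℓ i 0 x / B.ℓ i 1 x) (proc.P.map (proc.X i s)) :=
      (hrm i).aestronglyMeasurable
    refine ⟨?_, ?_, ?_⟩
    · exact (integrable_map_measure hasm (proc.X_meas i s).aemeasurable).mp
        (by rw [hmap]; exact Di.1)
    · have h2 : (∫ ω, B.ℓ i 0 (proc.X i s ω) / B.ℓ i 1 (proc.X i s ω) ∂proc.P)
          = ∫ x, B.ℓ i 0 x / B.ℓ i 1 x ∂(B.dist i 0) := by
        rw [← hmap, integral_map (proc.X_meas i s).aemeasurable hasm]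
      rw [h2]; exact Di.2.1
    · have hms : MeasurableSet {x : ℝ | B.ℓ i 1 x = 0} :=
        (B.ℓ_meas i 1) (measurableSet_singleton 0)
      have hpre : {ω | B.ℓ i 1 (proc.X i s ω) = 0} = proc.X i s ⁻¹' {x | B.ℓ i 1 x = 0} := rfl
      rw [hpre, ← Measure.map_apply (proc.X_meas i s) hms, hmap]
      exact Di.2.2
  have main : ∀ s, 1 ≤ s →
      Integrable (fun ω => (1 - proc.p s ω)⁻¹) proc.P ∧
      (∀ᵐ ω ∂proc.P, proc.p s ω < 1) ∧
      (∫ ω, (1 - proc.p s ω)⁻¹ ∂proc.P) ≤ 1 / (1 - prior) + (s - 1 : ℕ) * (32 * Δ^2) := by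
    intro s hs
    induction s, hs using Nat.le_induction with
    | base =>
      refine ⟨?_, ?_, ?_⟩
      · simp only [proc.p_one]; exact integrable_const _
      · exact Filter.Eventually.of_forall fun ω => by rw [proc.p_one]; exact hprior1
      · simp only [proc.p_one]
        rw [integral_const, probReal_univ]
        simp [one_div]
    | succ s hs ih =>
      obtain ⟨hInt, hpos, hbd⟩ := ih
      set V : Fin 2 → Ω → ℝ :=
        fun i ω => (proc.p s ω / (1 - proc.p s ω)) * (if proc.I s ω = i then (1:ℝ) else 0) with hV
      set W : Fin 2 → Ω → ℝ :=
        fun i ω => (B.ℓ i 0 (proc.X i s ω) / B.ℓ i 1 (proc.X i s ω)) * V i ω with hW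
      have hVnn : ∀ i ω, 0 ≤ V i ω := fun i ω =>
        mul_nonneg (div_nonneg (hppos s ω) (by linarith [hple s ω]))
          (by split <;> norm_num)
      have hVle : ∀ i ω, V i ω ≤ (1 - proc.p s ω)⁻¹ := by
        intro i ω
        have h1 : V i ω ≤ proc.p s ω / (1 - proc.p s ω) := by
          have hnn := div_nonneg (hppos s ω) (by linarith [hple s ω] : (0:ℝ) ≤ 1 - proc.p s ω)
          show (proc.p s ω / (1 - proc.p s ω)) * (if proc.I s ω = i then (1:ℝ) else 0)
            ≤ proc.p s ω / (1 - proc.p s ω)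
          split
          · simp
          · simpa using hnn
        exact le_trans h1 (hfrac s ω)
      have hVm : ∀ i : Fin 2, Measurable (V i) := by
        intro i
        refine ((hpm s).div (measurable_const.sub (hpm s))).mul ?_
        exact Measurable.ite ((hIm s) (measurableSet_singleton i)) measurable_const
          measurable_const
      have hVint : ∀ i, Integrable (V i) proc.P := fun i =>
        hInt.mono' (hVm i).aestronglyMeasurable
          (Filter.Eventually.of_forall fun ω => by
            rw [Real.norm_eq_abs, abs_of_nonneg (hVnn i ω)]; exact hVle i ω)
      have hVF : ∀ i : Fin 2,
          Measurable[proc.F s ⊔ MeasurableSpace.comap (proc.I s) ⊤] (V i) := by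
        intro i
        have h1 : Measurable[proc.F s ⊔ MeasurableSpace.comap (proc.I s) ⊤] (proc.p s) :=
          (proc.p_adapted s).mono le_sup_left le_rfl
        have hI' : @Measurable Ω (Fin 2) (MeasurableSpace.comap (proc.I s) ⊤) ⊤ (proc.I s) :=
          Measurable.of_comap_le le_rfl
        have h3 : @Measurable (Fin 2) ℝ ⊤ _ (fun j => if j = i then (1:ℝ) else 0) :=
          measurable_from_top
        have h2 : Measurable[proc.F s ⊔ MeasurableSpace.comap (proc.I s) ⊤]
            (fun ω => if proc.I s ω = i then (1:ℝ) else 0) :=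
          (h3.comp hI').mono le_sup_right le_rfl
        exact (h1.div (measurable_const.sub h1)).mul h2
      have hIndep : ∀ i : Fin 2,
          IndepFun (fun ω => B.ℓ i 0 (proc.X i s ω) / B.ℓ i 1 (proc.X i s ω)) (V i) proc.P := by
        intro i
        have h := proc.reward_indep i s
        have h2 := indep_of_indep_of_le_right h ((hVF i).comap_le)
        have h3 : IndepFun (proc.X i s) (V i) proc.P := h2
        have h4 := h3.comp (hrm i) measurable_id
        exact h4
      have hWint : ∀ i, Integrable (W i) proc.P := fun i =>
        (hIndep i).integrable_mul (key i s).1 (hVint i)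
      have hWval : ∀ i, (∫ ω, W i ω ∂proc.P) =
          (∫ ω, B.ℓ i 0 (proc.X i s ω) / B.ℓ i 1 (proc.X i s ω) ∂proc.P) *
            ∫ ω, V i ω ∂proc.P := fun i =>
        (hIndep i).integral_mul_eq_mul_integral (key i s).1.aestronglyMeasurable (hVint i).aestronglyMeasurable
      -- conditional expectation computations
      have hg0int : Integrable (fun ω => if proc.I s ω = 0 then (1:ℝ) else 0) proc.P := by
        refine (integrable_const (1:ℝ)).mono' ?_ ?_
        · exact (Measurable.ite ((hIm s) (measurableSet_singleton 0)) measurable_const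
            measurable_const).aestronglyMeasurable
        · exact Filter.Eventually.of_forall fun ω => by split <;> simp
      have hg1int : Integrable (fun ω => if proc.I s ω = 1 then (1:ℝ) else 0) proc.P := by
        refine (integrable_const (1:ℝ)).mono' ?_ ?_
        · exact (Measurable.ite ((hIm s) (measurableSet_singleton 1)) measurable_const
            measurable_const).aestronglyMeasurable
        · exact Filter.Eventually.of_forall fun ω => by split <;> simp
      have haqSM : StronglyMeasurable[proc.F s] (fun ω => proc.p s ω / (1 - proc.p s ω)) :=
        ((proc.p_adapted s).div (measurable_const.sub (proc.p_adapted s))).stronglyMeasurable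
      have hap := proc.action_prob s hs
      have hV0val : (∫ ω, V 0 ω ∂proc.P) = ∫ ω, (proc.p s ω / (1 - proc.p s ω)) * proc.p s ω ∂proc.P := by
        conv_lhs => rw [← integral_condExp (proc.F.le s)]
        refine integral_congr_ae ?_
        have hcm0 := condExp_mul_of_stronglyMeasurable_left (μ := proc.P) (m := proc.F s) haqSM
          (hVint 0) hg0int
        refine Filter.EventuallyEq.trans hcm0 ?_
        filter_upwards [hap] with ω h2
        simp only [Pi.mul_apply]
        rw [h2]
      have hV1val : (∫ ω, V 1 ω ∂proc.P) = ∫ ω, proc.p s ω ∂proc.P := by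
        have hg1eq : (fun ω => if proc.I s ω = 1 then (1:ℝ) else 0)
            = (fun _ => (1:ℝ)) - (fun ω => if proc.I s ω = 0 then (1:ℝ) else 0) := by
          funext ω
          rcases fin2 (proc.I s ω) with h|h <;>
            simp [h, Pi.sub_apply, (by decide : (0: Fin 2) ≠ 1), (by decide : (1: Fin 2) ≠ 0)]
        have hcg1 : proc.P[(fun ω => if proc.I s ω = 1 then (1:ℝ) else 0)|proc.F s]
            =ᵐ[proc.P] fun ω => 1 - proc.p s ω := by
          rw [hg1eq]
          refine Filter.EventuallyEq.trans (condExp_sub (integrable_const (1:ℝ)) hg0int _) ?_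
          have hc := condExp_const (proc.F.le s) (1:ℝ) (μ := proc.P)
          filter_upwards [hap] with ω h2
          simp only [Pi.sub_apply]
          rw [congrFun hc ω, h2]
        conv_lhs => rw [← integral_condExp (proc.F.le s)]
        refine integral_congr_ae ?_
        have hcm1 := condExp_mul_of_stronglyMeasurable_left (μ := proc.P) (m := proc.F s) haqSM
          (hVint 1) hg1int
        refine Filter.EventuallyEq.trans hcm1 ?_
        filter_upwards [hcg1, hpos] with ω h2 hlt
        simp only [Pi.mul_apply]
        rw [h2, div_mul_cancel₀ _ (by linarith : (1:ℝ) - proc.p s ω ≠ 0)]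
      -- pointwise inequality
      have hpt : ∀ ω, (1 - proc.p (s+1) ω)⁻¹ ≤ 1 + W 0 ω + W 1 ω := by
        intro ω
        have hb := proc.bayes s ω hs
        rcases fin2 (proc.I s ω) with hI|hI
        · have hW1 : W 1 ω = 0 := by
            simp [hW, hV, hI, (by decide : (0: Fin 2) ≠ 1)]
          have hW0 : W 0 ω = (B.ℓ 0 0 (proc.X 0 s ω) / B.ℓ 0 1 (proc.X 0 s ω)) *
              (proc.p s ω / (1 - proc.p s ω)) := by
            simp [hW, hV, hI]
          rw [hb, hI, hW1, hW0, add_zero]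
          refine le_trans (TS_aux_ineq (proc.p s ω) (B.ℓ 0 0 (proc.X 0 s ω))
            (B.ℓ 0 1 (proc.X 0 s ω)) (hppos s ω) (hple s ω) (B.ℓ_nonneg 0 0 _)
            (B.ℓ_nonneg 0 1 _)) (le_of_eq (by ring))
        · have hW0 : W 0 ω = 0 := by
            simp [hW, hV, hI, (by decide : (1: Fin 2) ≠ 0)]
          have hW1 : W 1 ω = (B.ℓ 1 0 (proc.X 1 s ω) / B.ℓ 1 1 (proc.X 1 s ω)) *
              (proc.p s ω / (1 - proc.p s ω)) := by
            simp [hW, hV, hI]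
          rw [hb, hI, hW1, hW0, add_zero]
          refine le_trans (TS_aux_ineq (proc.p s ω) (B.ℓ 1 0 (proc.X 1 s ω))
            (B.ℓ 1 1 (proc.X 1 s ω)) (hppos s ω) (hple s ω) (B.ℓ_nonneg 1 0 _)
            (B.ℓ_nonneg 1 1 _)) (le_of_eq (by ring))
      have hRint : Integrable (fun ω => 1 + W 0 ω + W 1 ω) proc.P :=
        ((integrable_const 1).add (hWint 0)).add (hWint 1)
      have hLnn : ∀ ω, 0 ≤ (1 - proc.p (s+1) ω)⁻¹ := fun ω =>
        inv_nonneg.mpr (by linarith [hple (s+1) ω])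
      have hLint : Integrable (fun ω => (1 - proc.p (s+1) ω)⁻¹) proc.P :=
        hRint.mono' ((measurable_const.sub (hpm (s+1))).inv).aestronglyMeasurable
          (Filter.Eventually.of_forall fun ω => by
            rw [Real.norm_eq_abs, abs_of_nonneg (hLnn ω)]; exact hpt ω)
      have ha1int : Integrable (fun ω => (proc.p s ω / (1 - proc.p s ω)) * proc.p s ω) proc.P := by
        refine hInt.mono' ?_ ?_
        · exact (((hpm s).div (measurable_const.sub (hpm s))).mul (hpm s)).aestronglyMeasurable
        · refine Filter.Eventually.of_forall fun ω => ?_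
          have hnn : 0 ≤ (proc.p s ω / (1 - proc.p s ω)) * proc.p s ω :=
            mul_nonneg (div_nonneg (hppos s ω) (by linarith [hple s ω])) (hppos s ω)
          rw [Real.norm_eq_abs, abs_of_nonneg hnn]
          calc (proc.p s ω / (1 - proc.p s ω)) * proc.p s ω
              ≤ (proc.p s ω / (1 - proc.p s ω)) * 1 := by
                refine mul_le_mul_of_nonneg_left (hple s ω)
                  (div_nonneg (hppos s ω) (by linarith [hple s ω]))
            _ ≤ (1 - proc.p s ω)⁻¹ := by rw [mul_one]; exact hfrac s ω
      have hIa_nn : 0 ≤ ∫ ω, proc.p s ω ∂proc.P := integral_nonneg fun ω => hppos s ω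
      have hIa_le : (∫ ω, proc.p s ω ∂proc.P) ≤ 1 := by
        have h := integral_mono (hpint s) (integrable_const 1) (fun ω => hple s ω)
        simpa using h
      have hI0_nn : 0 ≤ ∫ ω, (proc.p s ω / (1 - proc.p s ω)) * proc.p s ω ∂proc.P :=
        integral_nonneg fun ω =>
          mul_nonneg (div_nonneg (hppos s ω) (by linarith [hple s ω])) (hppos s ω)
      have chain : (∫ ω, (1 - proc.p (s+1) ω)⁻¹ ∂proc.P)
          ≤ (∫ ω, (1 - proc.p s ω)⁻¹ ∂proc.P) + 32 * Δ^2 := by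
        have c1 : (∫ ω, (1 - proc.p (s+1) ω)⁻¹ ∂proc.P) ≤ ∫ ω, 1 + W 0 ω + W 1 ω ∂proc.P :=
          integral_mono hLint hRint hpt
        have c2 : (∫ ω, 1 + W 0 ω + W 1 ω ∂proc.P)
            = 1 + (∫ ω, W 0 ω ∂proc.P) + ∫ ω, W 1 ω ∂proc.P := by
          have hsum1 : Integrable (fun ω => 1 + W 0 ω) proc.P := (integrable_const 1).add (hWint 0)
          have e1 : (∫ ω, 1 + W 0 ω + W 1 ω ∂proc.P)
              = (∫ ω, 1 + W 0 ω ∂proc.P) + ∫ ω, W 1 ω ∂proc.P := integral_add hsum1 (hWint 1)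
          have e2 : (∫ ω, 1 + W 0 ω ∂proc.P)
              = (∫ _ω, (1:ℝ) ∂proc.P) + ∫ ω, W 0 ω ∂proc.P :=
            integral_add (integrable_const 1) (hWint 0)
          have e3 : (∫ _ω, (1:ℝ) ∂proc.P) = 1 := by simp
          rw [e1, e2, e3]
        have c3 : (∫ ω, W 0 ω ∂proc.P)
            ≤ ∫ ω, (proc.p s ω / (1 - proc.p s ω)) * proc.p s ω ∂proc.P := by
          rw [hWval 0, hV0val]
          have hk := (key 0 s).2.1
          simp only [hρdef, if_pos rfl] at hk
          exact mul_le_of_le_one_left hI0_nn hk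
        have c4 : (∫ ω, W 1 ω ∂proc.P) ≤ (1 + 32 * Δ^2) * ∫ ω, proc.p s ω ∂proc.P := by
          rw [hWval 1, hV1val]
          have hk := (key 1 s).2.1
          simp only [hρdef, if_neg (by decide : (1 : Fin 2) ≠ 0)] at hk
          exact mul_le_mul_of_nonneg_right hk hIa_nn
        have c5 : (1 + 32 * Δ^2) * (∫ ω, proc.p s ω ∂proc.P)
            ≤ (∫ ω, proc.p s ω ∂proc.P) + 32 * Δ^2 := by
          nlinarith [hIa_nn, hIa_le, sq_nonneg Δ]
        have c6 : 1 + (∫ ω, (proc.p s ω / (1 - proc.p s ω)) * proc.p s ω ∂proc.P)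
            + (∫ ω, proc.p s ω ∂proc.P) = ∫ ω, (1 - proc.p s ω)⁻¹ ∂proc.P := by
          have heq : (∫ ω, ((1:ℝ) + (proc.p s ω / (1 - proc.p s ω)) * proc.p s ω + proc.p s ω) ∂proc.P)
              = ∫ ω, (1 - proc.p s ω)⁻¹ ∂proc.P := by
            refine integral_congr_ae ?_
            filter_upwards [hpos] with ω h
            have hne : (1:ℝ) - proc.p s ω ≠ 0 := by linarith
            field_simp
            ring
          have hsum2 : Integrable (fun ω => (1:ℝ) + (proc.p s ω / (1 - proc.p s ω)) * proc.p s ω)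
              proc.P := (integrable_const 1).add ha1int
          have f1 : (∫ ω, ((1:ℝ) + (proc.p s ω / (1 - proc.p s ω)) * proc.p s ω + proc.p s ω) ∂proc.P)
              = (∫ ω, ((1:ℝ) + (proc.p s ω / (1 - proc.p s ω)) * proc.p s ω) ∂proc.P)
                + ∫ ω, proc.p s ω ∂proc.P := integral_add hsum2 (hpint s)
          have f2 : (∫ ω, ((1:ℝ) + (proc.p s ω / (1 - proc.p s ω)) * proc.p s ω) ∂proc.P)
              = (∫ _ω, (1:ℝ) ∂proc.P)
                + ∫ ω, (proc.p s ω / (1 - proc.p s ω)) * proc.p s ω ∂proc.P :=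
            integral_add (integrable_const 1) ha1int
          have f3 : (∫ _ω, (1:ℝ) ∂proc.P) = 1 := by simp
          rw [← heq, f1, f2, f3]
        linarith
      refine ⟨hLint, ?_, ?_⟩
      · have hz0 := (key 0 s).2.2
        have hz1 := (key 1 s).2.2
        have hae0 : ∀ᵐ ω ∂proc.P, B.ℓ 0 1 (proc.X 0 s ω) ≠ 0 := by
          rw [ae_iff]
          simp only [ne_eq, not_not]
          exact hz0
        have hae1 : ∀ᵐ ω ∂proc.P, B.ℓ 1 1 (proc.X 1 s ω) ≠ 0 := by
          rw [ae_iff]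
          simp only [ne_eq, not_not]
          exact hz1
        filter_upwards [hpos, hae0, hae1] with ω h1 h2 h3
        rw [proc.bayes s ω hs]
        have hL1 : 0 < B.ℓ (proc.I s ω) 1 (proc.X (proc.I s ω) s ω) := by
          rcases fin2 (proc.I s ω) with h|h <;> rw [h]
          · exact lt_of_le_of_ne (B.ℓ_nonneg 0 1 _) (Ne.symm h2)
          · exact lt_of_le_of_ne (B.ℓ_nonneg 1 1 _) (Ne.symm h3)
        have hL0 : 0 ≤ B.ℓ (proc.I s ω) 0 (proc.X (proc.I s ω) s ω) := B.ℓ_nonneg _ _ _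
        have hD : 0 < proc.p s ω * B.ℓ (proc.I s ω) 0 (proc.X (proc.I s ω) s ω)
            + (1 - proc.p s ω) * B.ℓ (proc.I s ω) 1 (proc.X (proc.I s ω) s ω) := by
          nlinarith [hppos s ω, h1, mul_nonneg (hppos s ω) hL0]
        rw [div_lt_one hD]
        nlinarith [h1, hL1]
      · have hcast : ((s + 1 - 1 : ℕ) : ℝ) = ((s - 1 : ℕ) : ℝ) + 1 := by
          have h : s + 1 - 1 = (s - 1) + 1 := by omega
          rw [h]
          push_cast
          ring
        rw [hcast]
        linarith [chain, hbd]
  obtain ⟨hInt, hpos, hbd⟩ := main t ht1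
  have hcast : ((t - 1 : ℕ) : ℝ) ≤ (T : ℝ) := by
    have h : (t - 1 : ℕ) ≤ T := by omega
    exact_mod_cast h
  have hTc : (T:ℝ) * (32 * Δ^2) = 4 / (1 - prior) := by
    rw [hΔsq]
    field_simp
    ring
  have h5 : (∫ ω, (1 - proc.p t ω)⁻¹ ∂proc.P) ≤ 5 / (1 - prior) := by
    have h32 : (0:ℝ) ≤ 32 * Δ^2 := by positivity
    have hmul : ((t-1:ℕ):ℝ) * (32*Δ^2) ≤ (T:ℝ) * (32*Δ^2) :=
      mul_le_mul_of_nonneg_right hcast h32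
    have h4 : 1/(1-prior) + 4/(1-prior) = 5/(1-prior) := by ring
    rw [hTc] at hmul
    linarith [hbd]
  refine ⟨h5, ?_⟩
  set lam := (1 - prior)/5 with hlam
  have hlam0 : 0 < lam := by positivity
  have hqint : Integrable (fun ω => 1 - proc.p t ω) proc.P :=
    (integrable_const 1).sub (hpint t)
  have hsubint : Integrable (fun ω => 2*lam - lam^2 * (1 - proc.p t ω)⁻¹) proc.P :=
    (integrable_const _).sub (hInt.const_mul _)
  have hpt2 : ∀ᵐ ω ∂proc.P, 2*lam - lam^2 * (1 - proc.p t ω)⁻¹ ≤ 1 - proc.p t ω := by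
    filter_upwards [hpos] with ω h
    have hq0 : (0:ℝ) < 1 - proc.p t ω := by linarith
    have h3 : ((1 - proc.p t ω) - lam)^2 / (1 - proc.p t ω)
        = (1 - proc.p t ω) - 2*lam + lam^2 * (1 - proc.p t ω)⁻¹ := by
      field_simp
      ring
    have h4 : 0 ≤ (1 - proc.p t ω) - 2*lam + lam^2 * (1 - proc.p t ω)⁻¹ :=
      h3 ▸ div_nonneg (sq_nonneg _) hq0.le
    linarith
  have hmono := integral_mono_ae hsubint hqint hpt2
  have hA : (∫ ω, (2*lam - lam^2 * (1 - proc.p t ω)⁻¹) ∂proc.P)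
      = (∫ _ω, (2*lam : ℝ) ∂proc.P) - ∫ ω, lam^2 * (1 - proc.p t ω)⁻¹ ∂proc.P :=
    integral_sub (integrable_const _) (hInt.const_mul _)
  have hB : (∫ _ω, (2*lam:ℝ) ∂proc.P) = 2*lam := by simp
  have hC : (∫ ω, lam^2 * (1 - proc.p t ω)⁻¹ ∂proc.P)
      = lam^2 * ∫ ω, (1 - proc.p t ω)⁻¹ ∂proc.P := integral_const_mul _ _
  rw [hA, hB, hC] at hmono
  have hub : lam^2 * (∫ ω, (1 - proc.p t ω)⁻¹ ∂proc.P) ≤ lam^2 * (5/(1-prior)) :=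
    mul_le_mul_of_nonneg_left h5 (sq_nonneg lam)
  have hfin : lam^2 * (5/(1-prior)) = lam := by
    rw [hlam]
    field_simp
  linarith [hmono, hub]

end
end
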